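/- Every language expressible from a regular language L using only the operations of complement, Kleene star, and positive closure is, up to inclusion or exclusion of the empty word ε, equal to one of the ten languages: L, L⁺, Lᶜ⁺, L⁺ᶜ⁺, Lᶜ⁺ᶜ⁺ and their complements. In particular, the closure of {L} under complement, star, and plus is finite. -/

import Mathlib

open scoped Computability symmDiff

/-- The positive Kleene closure `L⁺` of a language. -/
def Language.plus {α : Type*} (L : Language α) : Language α := L * L∗

/-- Languages expressible from L by complement, Kleene star and positive closure. -/
inductive Language.ExprFrom {α : Type*} (L : Language α) : Language α → Prop
  | base : Language.ExprFrom L L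
  | compl {K : Language α} : Language.ExprFrom L K → Language.ExprFrom L Kᶜ
  | star {K : Language α} : Language.ExprFrom L K → Language.ExprFrom L (K∗)
  | plus {K : Language α} : Language.ExprFrom L K → Language.ExprFrom L K.plus

namespace ExprAux

variable {α : Type*}

/-- Two languages agree up to the empty word. -/
def R (K M : Language α) : Prop := ∀ w : List α, w ≠ [] → (w ∈ K ↔ w ∈ M)

lemma R.refl (K : Language α) : R K K := fun _ _ => Iff.rfl

lemma R.symm {K M : Language α} (h : R K M) : R M K := fun w hw => (h w hw).symm

lemma R.trans {K M N : Language α} (h : R K M) (h' : R M N) : R K N :=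
  fun w hw => (h w hw).trans (h' w hw)

lemma R.compl {K M : Language α} (h : R K M) : R Kᶜ Mᶜ := by
  intro w hw
  have := h w hw
  constructor <;> intro hx hc
  · exact absurd (this.mpr hc) hx
  · exact absurd (this.mp hc) hx

lemma kstar_eq_of_R {K M : Language α} (h : R K M) : K∗ = M∗ := by
  ext w
  rw [Language.mem_kstar_iff_exists_nonempty, Language.mem_kstar_iff_exists_nonempty]
  constructor <;> rintro ⟨S, rfl, hS⟩ <;>
    exact ⟨S, rfl, fun y hy =>
      ⟨by have := hS y hy; have := h y this.2; tauto, (hS y hy).2⟩⟩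

lemma plus_R_kstar (K : Language α) : R K.plus (K∗) := by
  intro w hw
  constructor
  · intro hwp
    rw [← Language.one_add_self_mul_kstar_eq_kstar, Language.mem_add]
    exact Or.inr hwp
  · intro hws
    rw [← Language.one_add_self_mul_kstar_eq_kstar, Language.mem_add] at hws
    rcases hws with h1 | h2
    · exact absurd ((Language.mem_one w).mp h1) hw
    · exact h2

lemma R.plus {K M : Language α} (h : R K M) : R K.plus M.plus := fun w hw => by
  rw [plus_R_kstar K w hw, plus_R_kstar M w hw, kstar_eq_of_R h]

/-- `K` is closed under concatenation of nonempty words. -/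
def C (K : Language α) : Prop :=
  ∀ u v : List α, u ≠ [] → v ≠ [] → u ∈ K → v ∈ K → u ++ v ∈ K

lemma kstar_append {K : Language α} {a b : List α} (ha : a ∈ K∗) (hb : b ∈ K∗) :
    a ++ b ∈ K∗ := by
  rw [Language.mem_kstar] at ha hb ⊢
  rcases ha with ⟨S, rfl, hS⟩
  rcases hb with ⟨T, rfl, hT⟩
  exact ⟨S ++ T, by simp, by intro y hy; rcases List.mem_append.mp hy with h | h
                             exacts [hS y h, hT y h]⟩

lemma C_plus (K : Language α) : C K.plus := by
  intro u v _ _ hu hv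
  rw [Language.plus, Language.mem_mul] at hu hv ⊢
  rcases hu with ⟨a, ha, b, hb, rfl⟩
  rcases hv with ⟨c, hc, d, hd, rfl⟩
  refine ⟨a, ha, b ++ (c ++ d), ?_, by simp⟩
  exact kstar_append hb (kstar_append (Language.mem_kstar.mpr ⟨[c], by simp, by simpa⟩) hd)

lemma mem_plus_of_mem {K : Language α} {w : List α} (h : w ∈ K) : w ∈ K.plus := by
  rw [Language.plus, Language.mem_mul]
  exact ⟨w, h, [], Language.nil_mem_kstar K, by simp⟩

lemma flatten_mem_of_C {K : Language α} (hC : C K) :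
    ∀ S : List (List α), S ≠ [] → (∀ y ∈ S, y ∈ K ∧ y ≠ []) → S.flatten ∈ K := by
  intro S
  induction S with
  | nil => intro h; exact absurd rfl h
  | cons a T ih =>
    intro _ hmem
    rcases eq_or_ne T [] with rfl | hT
    · simpa using (hmem a (by simp)).1
    · have ha := hmem a (by simp)
      have hT' : T.flatten ∈ K := ih hT fun y hy => hmem y (by simp [hy])
      have hTne : T.flatten ≠ [] := by
        rw [Ne, List.flatten_eq_nil_iff]
        intro h
        rcases List.exists_mem_of_ne_nil T hT with ⟨y, hy⟩
        exact (hmem y (by simp [hy])).2 (h y hy)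
      simpa using hC a T.flatten ha.2 hTne ha.1 hT'

lemma plus_R_self_of_C {K : Language α} (hC : C K) : R K.plus K := by
  intro w hw
  constructor
  · intro hwp
    have hws : w ∈ K∗ := (plus_R_kstar K w hw).mp hwp
    rw [Language.mem_kstar_iff_exists_nonempty] at hws
    rcases hws with ⟨S, rfl, hS⟩
    have hSne : S ≠ [] := by rintro rfl; simp at hw
    exact flatten_mem_of_C hC S hSne hS
  · exact mem_plus_of_mem

/-- Splitting a concatenation along a flatten: either the break falls on a block boundary
or strictly inside a block. -/
lemma split_flatten :
    ∀ (S : List (List α)) (u v : List α), u ≠ [] → v ≠ [] → u ++ v = S.flatten →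
      (∃ S₁ S₂, S = S₁ ++ S₂ ∧ u = S₁.flatten ∧ v = S₂.flatten) ∨
      (∃ (S₁ : List (List α)) (w₁ w₂ : List α) (S₂ : List (List α)),
        S = S₁ ++ (w₁ ++ w₂) :: S₂ ∧ w₁ ≠ [] ∧ w₂ ≠ [] ∧
        u = S₁.flatten ++ w₁ ∧ v = w₂ ++ S₂.flatten) := by
  intro S
  induction S with
  | nil =>
    intro u v hu _ h
    simp only [List.flatten_nil] at h
    exact absurd (List.append_eq_nil_iff.mp h).1 hu
  | cons a T ih =>
    intro u v hu hv h
    rw [List.flatten_cons] at h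
    rcases List.append_eq_append_iff.mp h.symm with ⟨t, ht1, ht2⟩ | ⟨t, ht1, ht2⟩
    ·
      -- a ++ T.flatten = u ++ v with u = a ++ t ∧ v = ... depends
      subst ht1
      rcases eq_or_ne t [] with rfl | htne
      · -- u = a
        left
        refine ⟨[a], T, by simp, by simp, by simpa using ht2.symm⟩
      · rcases ih t v htne hv ht2.symm with ⟨S₁, S₂, rfl, rfl, rfl⟩ |
          ⟨S₁, w₁, w₂, S₂, rfl, hw₁, hw₂, rfl, rfl⟩
        · left
          exact ⟨a :: S₁, S₂, by simp, by simp [ht2], rfl⟩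
        · right
          exact ⟨a :: S₁, w₁, w₂, S₂, by simp, hw₁, hw₂, by simp [ht2], rfl⟩
    · -- a = u ++ t, v = t ++ T.flatten
      rcases eq_or_ne t [] with rfl | htne
      · left
        refine ⟨[a], T, by simp, ?_, ?_⟩
        · simp [ht1]
        · simpa using ht2
      · right
        exact ⟨[], u, t, T, by simp [ht1], hu, htne, by simp, ht2⟩

/-- Key lemma: if `Y` is concatenation-closed then so is `((Yᶜ).plus)ᶜ`. -/
lemma C_compl_plus_compl {Y : Language α} (hY : C Y) : C (((Yᶜ).plus)ᶜ) := by
  intro u v hu hv huZ hvZ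
  intro habs
  have hne : u ++ v ≠ [] := by simp [hu]
  have h2 : u ++ v ∈ (Yᶜ)∗ := (plus_R_kstar (Yᶜ) _ hne).mp habs
  rw [Language.mem_kstar_iff_exists_nonempty] at h2
  rcases h2 with ⟨S, hflat, hS⟩
  have notin : ∀ w : List α, w ≠ [] → w ∉ ((Yᶜ).plus) → w ∉ (Yᶜ)∗ := by
    intro w hw hwp hws
    exact hwp ((plus_R_kstar (Yᶜ) w hw).mpr hws)
  rcases split_flatten S u v hu hv hflat with
    ⟨S₁, S₂, rfl, hu1, _⟩ | ⟨S₁, w₁, w₂, S₂, rfl, hw₁, hw₂, hu1, hv1⟩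
  · apply notin u hu huZ
    rw [Language.mem_kstar]
    exact ⟨S₁, hu1, fun y hy => (hS y (by simp [hy])).1⟩
  · -- show w₁ ∈ Y
    have hw1Y : w₁ ∈ Y := by
      by_contra hw1Y
      apply notin u hu huZ
      rw [Language.mem_kstar]
      refine ⟨S₁ ++ [w₁], by simpa using hu1, ?_⟩
      intro y hy
      rcases List.mem_append.mp hy with h | h
      · exact (hS y (by simp [h])).1
      · simp only [List.mem_singleton] at h; subst h; exact hw1Y
    have hw2Y : w₂ ∈ Y := by
      by_contra hw2Y
      apply notin v hv hvZ
      rw [Language.mem_kstar]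
      refine ⟨w₂ :: S₂, by simpa using hv1, ?_⟩
      intro y hy
      rcases List.mem_cons.mp hy with h | h
      · subst h; exact hw2Y
      · exact (hS y (by simp [h])).1
    have : w₁ ++ w₂ ∈ Y := hY w₁ w₂ hw₁ hw₂ hw1Y hw2Y
    exact (hS (w₁ ++ w₂) (by simp)).1 this

lemma sd_le_one_of_R {K M : Language α} (h : R K M) : K ∆ M ≤ (1 : Language α) := by
  intro w hw
  change w ∈ (1 : Language α)
  rw [Language.mem_one]
  by_contra hne
  rcases Set.mem_symmDiff.mp hw with ⟨h1, h2⟩ | ⟨h1, h2⟩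
  · exact h2 ((h w hne).mp h1)
  · exact h2 ((h w hne).mpr h1)

lemma eq_or_eq_of_R {K M : Language α} (h : R K M) :
    K = ({w | w ∈ M ∨ w = []} : Set (List α)) ∨
    K = ({w | w ∈ M ∧ w ≠ []} : Set (List α)) := by
  by_cases hnil : ([] : List α) ∈ K
  · left
    ext w
    constructor
    · intro hw
      rcases eq_or_ne w [] with rfl | hne
      · exact Or.inr rfl
      · exact Or.inl ((h w hne).mp hw)
    · intro hw
      rcases eq_or_ne w [] with rfl | hne
      · exact hnil
      · rcases hw with hw | hw
        · exact (h w hne).mpr hw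
        · exact absurd hw hne
  · right
    ext w
    constructor
    · intro hw
      rcases eq_or_ne w [] with rfl | hne
      · exact absurd hw hnil
      · exact ⟨(h w hne).mp hw, hne⟩
    · rintro ⟨hw, hne⟩
      exact (h w hne).mpr hw

end ExprAux

open ExprAux

/-- Every language expressible from a regular language L by complement, star and
positive closure equals, up to the empty word, one of the ten languages
L, L⁺, Lᶜ⁺, L⁺ᶜ⁺, Lᶜ⁺ᶜ⁺ and their complements; in particular the closure of {L}
under these operations is finite. -/
theorem exprFrom_classification {α : Type} (L : Language α) (hL : L.IsRegular) :
    (∀ K : Language α, L.ExprFrom K →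
      ∃ M ∈ ({L, L.plus, (Lᶜ).plus, ((L.plus)ᶜ).plus, (((Lᶜ).plus)ᶜ).plus,
              Lᶜ, (L.plus)ᶜ, ((Lᶜ).plus)ᶜ, (((L.plus)ᶜ).plus)ᶜ,
              ((((Lᶜ).plus)ᶜ).plus)ᶜ} : Set (Language α)),
        K ∆ M ≤ (1 : Language α)) ∧
    {K : Language α | L.ExprFrom K}.Finite := by
  classical
  set ten : Set (Language α) :=
    ({L, L.plus, (Lᶜ).plus, ((L.plus)ᶜ).plus, (((Lᶜ).plus)ᶜ).plus,
      Lᶜ, (L.plus)ᶜ, ((Lᶜ).plus)ᶜ, (((L.plus)ᶜ).plus)ᶜ,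
      ((((Lᶜ).plus)ᶜ).plus)ᶜ} : Set (Language α)) with hten
  -- ten is closed under complement (exactly)
  have tenCompl : ∀ M ∈ ten, Mᶜ ∈ ten := by
    intro M hM
    simp only [hten, Set.mem_insert_iff, Set.mem_singleton_iff] at hM ⊢
    rcases hM with rfl|rfl|rfl|rfl|rfl|rfl|rfl|rfl|rfl|rfl <;> simp [compl_compl]
  -- ten is closed under plus, up to R
  have tenPlus : ∀ M ∈ ten, ∃ M' ∈ ten, R M.plus M' := by
    intro M hM
    simp only [hten, Set.mem_insert_iff, Set.mem_singleton_iff] at hM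
    rcases hM with rfl|rfl|rfl|rfl|rfl|rfl|rfl|rfl|rfl|rfl
    · exact ⟨M.plus, by simp [hten], R.refl _⟩
    · exact ⟨L.plus, by simp [hten], plus_R_self_of_C (C_plus L)⟩
    · exact ⟨(Lᶜ).plus, by simp [hten], plus_R_self_of_C (C_plus _)⟩
    · exact ⟨((L.plus)ᶜ).plus, by simp [hten], plus_R_self_of_C (C_plus _)⟩
    · exact ⟨(((Lᶜ).plus)ᶜ).plus, by simp [hten], plus_R_self_of_C (C_plus _)⟩
    · exact ⟨(Lᶜ).plus, by simp [hten], R.refl _⟩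
    · exact ⟨((L.plus)ᶜ).plus, by simp [hten], R.refl _⟩
    · exact ⟨(((Lᶜ).plus)ᶜ).plus, by simp [hten], R.refl _⟩
    · exact ⟨(((L.plus)ᶜ).plus)ᶜ, by simp [hten],
        plus_R_self_of_C (C_compl_plus_compl (C_plus L))⟩
    · exact ⟨((((Lᶜ).plus)ᶜ).plus)ᶜ, by simp [hten],
        plus_R_self_of_C (C_compl_plus_compl (C_plus (Lᶜ)))⟩
  -- main invariant
  have main : ∀ K : Language α, L.ExprFrom K → ∃ M ∈ ten, R K M := by
    intro K hK
    induction hK with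
    | base => exact ⟨L, by simp [hten], R.refl _⟩
    | compl h ih =>
      rcases ih with ⟨M, hM, hR⟩
      exact ⟨Mᶜ, tenCompl M hM, hR.compl⟩
    | star h ih =>
      rcases ih with ⟨M, hM, hR⟩
      rcases tenPlus M hM with ⟨M', hM', hR'⟩
      exact ⟨M', hM', ((plus_R_kstar _).symm.trans (hR.plus.trans hR'))⟩
    | plus h ih =>
      rcases ih with ⟨M, hM, hR⟩
      rcases tenPlus M hM with ⟨M', hM', hR'⟩
      exact ⟨M', hM', hR.plus.trans hR'⟩
  constructor
  · intro K hK
    rcases main K hK with ⟨M, hM, hR⟩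
    exact ⟨M, hM, sd_le_one_of_R hR⟩
  · -- finiteness
    have tenFin : ten.Finite := by
      rw [hten]
      apply Set.Finite.insert; apply Set.Finite.insert; apply Set.Finite.insert
      apply Set.Finite.insert; apply Set.Finite.insert; apply Set.Finite.insert
      apply Set.Finite.insert; apply Set.Finite.insert; apply Set.Finite.insert
      exact Set.finite_singleton _
    have hsub : {K : Language α | L.ExprFrom K} ⊆
        ((fun M : Language α => ({w | w ∈ M ∨ w = []} : Set (List α))) '' ten) ∪
        ((fun M : Language α => ({w | w ∈ M ∧ w ≠ []} : Set (List α))) '' ten) := by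
      intro K hK
      rcases main K hK with ⟨M, hM, hR⟩
      rcases eq_or_eq_of_R hR with h | h
      · exact Or.inl ⟨M, hM, h.symm⟩
      · exact Or.inr ⟨M, hM, h.symm⟩
    exact Set.Finite.subset ((tenFin.image _).union (tenFin.image _)) hsub
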